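/- For the Somos-4 quiver S with exchange matrix having arrows: 1 arrow v₁→v₂, 3 arrows v₂→v₃, 1 arrow v₃→v₄, 2 arrows v₃→v₁, 2 arrows v₄→v₂, 1 arrow v₁→v₄, and unipotent companion U with respect to the linear order v₁ < v₄ < v₂ < v₃, the Markov invariant M_S = 4 + (coefficient of t³ in det(tU - Uᵀ)) equals 0. -/

import Mathlib

open Matrix

set_option maxHeartbeats 1000000

theorem stmt13 (B U : Matrix (Fin 4) (Fin 4) ℤ)
    (hB : B = !![0, 1, -2, 1; -1, 0, 3, -2; 2, -3, 0, 1; -1, 2, -1, 0])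
    (π : Fin 4 → Fin 4) (hπ : π = ![0, 3, 1, 2])
    (hUt : ∀ i j : Fin 4, j < i → U i j = 0) (hUd : ∀ i, U i i = 1)
    (hUB : Uᵀ - U = B.submatrix π π) :
    (4 : ℤ) + (((Polynomial.X : Polynomial ℤ) • U.map Polynomial.C - Uᵀ.map Polynomial.C).det).coeff 3
      = 0 := by
  have hU : U = !![1,-1,-1,2; 0,1,-2,1; 0,0,1,-3; 0,0,0,1] := by
    have key : ∀ i j : Fin 4, i < j → U i j = B (π j) (π i) + U j i := by
    -- from hUB at (j,i): U i j - U j i = Bπ j i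
      intro i j hij
      have := congrFun (congrFun hUB j) i
      simp [Matrix.sub_apply, Matrix.transpose_apply, Matrix.submatrix_apply] at this
      linear_combination this
    clear hUB
    subst hB hπ
    ext i j
    rcases lt_trichotomy i j with h | h | h
    · rw [key i j h, hUt j i h]
      fin_cases i <;> fin_cases j <;> first | exact absurd h (by decide) | rfl
    · subst h; rw [hUd]; fin_cases i <;> norm_num
    · rw [hUt i j h]; fin_cases i <;> fin_cases j <;> first | exact absurd h (by decide) | norm_num
  subst hU
  have hM : ((Polynomial.X : Polynomial ℤ) • (!![1,-1,-1,2; 0,1,-2,1; 0,0,1,-3; 0,0,0,1] : Matrix (Fin 4) (Fin 4) ℤ).map Polynomial.C - (!![1,-1,-1,2; 0,1,-2,1; 0,0,1,-3; 0,0,0,1] : Matrix (Fin 4) (Fin 4) ℤ)ᵀ.map Polynomial.C)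
      = !![Polynomial.X - 1, -Polynomial.X, -Polynomial.X, 2*Polynomial.X;
           1, Polynomial.X - 1, -2*Polynomial.X, Polynomial.X;
           1, 2, Polynomial.X - 1, -3*Polynomial.X;
           -2, -1, 3, Polynomial.X - 1] := by
    have hT : (!![1,-1,-1,2; 0,1,-2,1; 0,0,1,-3; 0,0,0,1] : Matrix (Fin 4) (Fin 4) ℤ)ᵀ
        = !![1,0,0,0; -1,1,0,0; -1,-2,1,0; 2,1,-3,1] := by
      ext i j; fin_cases i <;> fin_cases j <;> rfl
    rw [hT]
    ext i j
    fin_cases i <;> fin_cases j <;>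
      simp [Matrix.map_apply, Matrix.vecHead, Matrix.vecTail] <;> ring
  rw [hM]
  have hdet : ((!![Polynomial.X - 1, -Polynomial.X, -Polynomial.X, 2*Polynomial.X;
           1, Polynomial.X - 1, -2*Polynomial.X, Polynomial.X;
           1, 2, Polynomial.X - 1, -3*Polynomial.X;
           -2, -1, 3, Polynomial.X - 1] : Matrix (Fin 4) (Fin 4) (Polynomial ℤ)).det)
      = Polynomial.X^4 - Polynomial.C 4 * Polynomial.X^3 + Polynomial.C 6 * Polynomial.X^2 - Polynomial.C 4 * Polynomial.X + 1 := by
    simp [Matrix.det_succ_row_zero, Fin.sum_univ_succ,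
      show Fin.succAbove (1:Fin 4) (2:Fin 3) = 3 from rfl, show Fin.succAbove (2:Fin 4) (2:Fin 3) = 3 from rfl,
      show Fin.succAbove (3:Fin 4) (2:Fin 3) = 2 from rfl]
    ring
  rw [hdet]
  simp [Polynomial.coeff_X, Polynomial.coeff_one]
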